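/- A pure quaternion q has an inverse with respect to the spherical product (i.e., there exists a pure quaternion q' with q ×ₛ q' = k) if and only if q = c·k for some nonzero real number c; in that case the inverse is (1/c)·k. -/

import Mathlib

open scoped Quaternion
open Bornology

noncomputable def sCoord (ρ θ φ : ℝ) : ℍ[ℝ] :=
  ⟨0, ρ * (Real.sin φ * Real.cos θ), ρ * (Real.sin φ * Real.sin θ), ρ * Real.cos φ⟩

noncomputable def sphRho (q : ℍ[ℝ]) : ℝ := ‖q‖

noncomputable def sphTheta (q : ℍ[ℝ]) : ℝ :=
  if q.imI = 0 ∧ q.imJ = 0 then 0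
  else if Complex.arg ⟨q.imI, q.imJ⟩ < 0 then Complex.arg ⟨q.imI, q.imJ⟩ + 2 * Real.pi
  else Complex.arg ⟨q.imI, q.imJ⟩

open Classical in
noncomputable def sphPhi (q : ℍ[ℝ]) : ℝ :=
  if q = 0 then 0 else Real.arccos (q.imK / ‖q‖)

noncomputable def sprod (q₁ q₂ : ℍ[ℝ]) : ℍ[ℝ] :=
  sCoord (sphRho q₁ * sphRho q₂) (sphTheta q₁ + sphTheta q₂) (sphPhi q₁ + sphPhi q₂)

noncomputable def spow (n : ℕ) (q : ℍ[ℝ]) : ℍ[ℝ] :=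
  sCoord (sphRho q ^ n) (n * sphTheta q) (n * sphPhi q)

/- Auxiliary material -/

noncomputable def kq : ℍ[ℝ] := ⟨0,0,0,1⟩

lemma kq_eq : kq = (⟨0,0,0,1⟩:ℍ[ℝ]) := rfl

lemma smul_kq (c : ℝ) : c • kq = (⟨0,0,0,c⟩:ℍ[ℝ]) := by ext <;> show c * _ = _ <;> simp [kq]

lemma re_smul_kq (c : ℝ) : (c • kq).re = 0 := by rw [smul_kq]

lemma imK_smul_kq (c : ℝ) : (c • kq).imK = c := by rw [smul_kq]

lemma norm_smul_kq (c : ℝ) : ‖c • kq‖ = |c| := by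
  have h := Quaternion.normSq_eq_norm_mul_self (c • kq)
  have h2 : Quaternion.normSq (c • kq) = c^2 := by
    rw [Quaternion.normSq_def']; show (c*0)^2 + (c*0)^2 + (c*0)^2 + (c*1)^2 = c^2; ring
  rw [h2] at h
  nlinarith [norm_nonneg (c • kq), abs_nonneg c, sq_abs c, abs_mul_abs_self c]

lemma sphRho_smul_kq (c : ℝ) : sphRho (c • kq) = |c| := norm_smul_kq c

lemma smul_kq_ne_zero {c : ℝ} (hc : c ≠ 0) : c • kq ≠ 0 := by
  intro h
  have := congrArg QuaternionAlgebra.imK h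
  rw [imK_smul_kq] at this
  exact hc (by simpa using this)

lemma sphTheta_smul_kq (c : ℝ) : sphTheta (c • kq) = 0 := by
  rw [sphTheta, smul_kq]
  simp

lemma sphPhi_smul_kq_pos {c : ℝ} (hc : 0 < c) : sphPhi (c • kq) = 0 := by
  rw [sphPhi, if_neg (smul_kq_ne_zero hc.ne'), norm_smul_kq, imK_smul_kq,
    abs_of_pos hc, div_self hc.ne', Real.arccos_one]

lemma sphPhi_smul_kq_neg {c : ℝ} (hc : c < 0) : sphPhi (c • kq) = Real.pi := by
  rw [sphPhi, if_neg (smul_kq_ne_zero hc.ne), norm_smul_kq, imK_smul_kq,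
    abs_of_neg hc]
  rw [div_neg, div_self hc.ne, Real.arccos_neg, Real.arccos_one]
  ring

lemma abs_imK_le (q : ℍ[ℝ]) : |q.imK| ≤ ‖q‖ := by
  have h := Quaternion.normSq_eq_norm_mul_self q
  rw [Quaternion.normSq_def'] at h
  nlinarith [norm_nonneg q, abs_nonneg q.imK, sq_abs q.imK, le_abs_self q.imK, neg_abs_le q.imK]

lemma eq_smul_kq_of_imK {q : ℍ[ℝ]} (hre : q.re = 0) (h : |q.imK| = ‖q‖) :
    q = q.imK • kq := by
  have h2 := Quaternion.normSq_eq_norm_mul_self q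
  rw [Quaternion.normSq_def'] at h2
  have h3 : q.imK^2 = ‖q‖*‖q‖ := by rw [← h, abs_mul_abs_self]; ring
  rw [smul_kq]; refine Quaternion.ext_iff.mpr ?_
  refine ⟨hre, ?_, ?_, rfl⟩ <;> dsimp only <;> nlinarith [sq_nonneg q.imI, sq_nonneg q.imJ]

lemma sphPhi_nonneg (q : ℍ[ℝ]) : 0 ≤ sphPhi q := by
  rw [sphPhi]; split
  · exact le_refl 0
  · exact Real.arccos_nonneg _

lemma sphPhi_le_pi (q : ℍ[ℝ]) : sphPhi q ≤ Real.pi := by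
  rw [sphPhi]; split
  · exact Real.pi_pos.le
  · exact Real.arccos_le_pi _

/-- A pure quaternion has an inverse for the spherical product iff it is a
nonzero real multiple of k, in which case the inverse is (1/c) • k. -/
theorem sprod_inverse_iff (q : ℍ[ℝ]) (hq : q.re = 0) :
    ((∃ q' : ℍ[ℝ], q'.re = 0 ∧ sprod q q' = (⟨0, 0, 0, 1⟩ : ℍ[ℝ])) ↔
      ∃ c : ℝ, c ≠ 0 ∧ q = c • (⟨0, 0, 0, 1⟩ : ℍ[ℝ])) ∧
    (∀ c : ℝ, c ≠ 0 → q = c • (⟨0, 0, 0, 1⟩ : ℍ[ℝ]) →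
      sprod q ((1 / c) • (⟨0, 0, 0, 1⟩ : ℍ[ℝ])) = (⟨0, 0, 0, 1⟩ : ℍ[ℝ])) := by
  have part2 : ∀ c : ℝ, c ≠ 0 → q = c • (⟨0, 0, 0, 1⟩ : ℍ[ℝ]) →
      sprod q ((1 / c) • (⟨0, 0, 0, 1⟩ : ℍ[ℝ])) = (⟨0, 0, 0, 1⟩ : ℍ[ℝ]) := by
    intro c hc hq'
    subst hq'
    show sprod (c • kq) ((1/c) • kq) = kq
    have hinv : c ≠ 0 → |c| * |1/c| = 1 := by
      intro hc
      rw [← abs_mul, mul_one_div, div_self hc, abs_one]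
    rcases hc.lt_or_gt with hneg | hpos
    · have hneg' : 1/c < 0 := one_div_neg.mpr hneg
      rw [sprod, sphRho_smul_kq, sphRho_smul_kq, sphTheta_smul_kq, sphTheta_smul_kq,
        sphPhi_smul_kq_neg hneg, sphPhi_smul_kq_neg hneg', hinv hc]
      rw [sCoord, kq_eq]; refine Quaternion.ext_iff.mpr ?_
      refine ⟨rfl, ?_, ?_, ?_⟩ <;> dsimp only <;>
        rw [show Real.pi + Real.pi = 2 * Real.pi by ring] <;>
        simp [Real.sin_two_pi, Real.cos_two_pi]
    · have hpos' : 0 < 1/c := by positivity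
      rw [sprod, sphRho_smul_kq, sphRho_smul_kq, sphTheta_smul_kq, sphTheta_smul_kq,
        sphPhi_smul_kq_pos hpos, sphPhi_smul_kq_pos hpos', hinv hc]
      rw [sCoord, kq_eq]; refine Quaternion.ext_iff.mpr ?_
      refine ⟨rfl, ?_, ?_, ?_⟩ <;> simp
  refine ⟨⟨?_, ?_⟩, part2⟩
  · rintro ⟨q', hq're, h⟩
    rw [sprod, sCoord] at h; replace h := Quaternion.ext_iff.mp h
    obtain ⟨-, e1, e2, e3⟩ := h
    dsimp only at e1 e2 e3
    set r := sphRho q * sphRho q' with hr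
    set θ := sphTheta q + sphTheta q' with hθ
    set φ := sphPhi q + sphPhi q' with hφ
    have hrne : r ≠ 0 := by
      intro h0; rw [h0, zero_mul] at e3; exact one_ne_zero e3.symm
    have hsin : Real.sin φ = 0 := by
      have key : (r * Real.sin φ)^2 = 0 := by
        have hpyth := Real.sin_sq_add_cos_sq θ
        have : (r * Real.sin φ)^2 =
            (r * (Real.sin φ * Real.sin θ))^2 + (r * (Real.sin φ * Real.cos θ))^2 := by
          linear_combination (-(r * Real.sin φ)^2) * hpyth
        rw [this, e1, e2]; ring
      have := pow_eq_zero_iff (n := 2) (by norm_num) |>.mp key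
      rcases mul_eq_zero.mp this with h' | h'
      · exact absurd h' hrne
      · exact h'
    have hcos2 : Real.cos φ ^ 2 = 1 := by
      have := Real.sin_sq_add_cos_sq φ
      nlinarith [hsin]
    have hrnonneg : 0 ≤ r := mul_nonneg (norm_nonneg q) (norm_nonneg q')
    have hcos : Real.cos φ = 1 := by
      have hfact : (Real.cos φ - 1) * (Real.cos φ + 1) = 0 := by linear_combination hcos2
      rcases mul_eq_zero.mp hfact with h' | h'
      · linarith
      · exfalso; nlinarith
    have hrone : r = 1 := by rw [hcos, mul_one] at e3; exact e3
    have hqnorm : ‖q‖ ≠ 0 := by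
      intro h0
      apply hrne
      rw [hr]; show ‖q‖ * ‖q'‖ = 0
      rw [h0, zero_mul]
    have hq0 : q ≠ 0 := norm_ne_zero_iff.mp hqnorm
    have hqpos : 0 < ‖q‖ := norm_pos_iff.mpr hq0
    -- φ = 0 or 2π
    have hφ0 : 0 ≤ φ := by
      rw [hφ]; exact add_nonneg (sphPhi_nonneg q) (sphPhi_nonneg q')
    have hφ2 : φ ≤ 2 * Real.pi := by
      rw [hφ]
      have := sphPhi_le_pi q; have := sphPhi_le_pi q'
      linarith
    obtain ⟨n, hn⟩ := (Real.cos_eq_one_iff φ).mp hcos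
    have hπ := Real.pi_pos
    have hn0 : (0:ℤ) ≤ n := by
      by_contra h'
      push_neg at h'
      have h'' : n ≤ -1 := by omega
      have : (n:ℝ) ≤ -1 := by exact_mod_cast h''
      nlinarith
    have hn1 : n ≤ 1 := by
      by_contra h'
      push_neg at h'
      have : (2:ℝ) ≤ (n:ℝ) := by exact_mod_cast h'
      nlinarith
    interval_cases n
    · -- φ = 0, so sphPhi q = 0
      have hφeq : φ = 0 := by rw [← hn]; norm_num
      have hphiq : sphPhi q = 0 := by
        have := sphPhi_nonneg q; have := sphPhi_nonneg q'
        rw [hφ] at hφeq; linarith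
      rw [sphPhi, if_neg hq0, Real.arccos_eq_zero] at hphiq
      have himK : q.imK = ‖q‖ := by
        have h1 : ‖q‖ ≤ q.imK := (one_le_div hqpos).mp hphiq
        have h2 := abs_imK_le q
        have := le_abs_self q.imK
        linarith [abs_le.mp h2 |>.2]
      refine ⟨q.imK, ?_, ?_⟩
      · rw [himK]; exact hqnorm
      · rw [← kq_eq]
        exact eq_smul_kq_of_imK hq (by rw [himK, abs_of_pos (himK ▸ hqpos)] )
    · -- φ = 2π, so sphPhi q = π
      have hφeq : φ = 2 * Real.pi := by rw [← hn]; push_cast; ring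
      have hphiq : sphPhi q = Real.pi := by
        have := sphPhi_le_pi q; have := sphPhi_le_pi q'
        rw [hφ] at hφeq; linarith
      rw [sphPhi, if_neg hq0, Real.arccos_eq_pi] at hphiq
      have himK : q.imK = -‖q‖ := by
        have h1 : q.imK ≤ -‖q‖ := by
          have := (div_le_iff₀ hqpos).mp hphiq
          linarith
        have h2 := abs_imK_le q
        linarith [abs_le.mp h2 |>.1]
      refine ⟨q.imK, ?_, ?_⟩
      · rw [himK]; intro h'; exact hqnorm (by linarith [neg_eq_zero.mp h'])
      · rw [← kq_eq]
        refine eq_smul_kq_of_imK hq ?_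
        rw [himK, abs_neg, abs_of_pos hqpos]
  · rintro ⟨c, hc, hq'⟩
    exact ⟨(1/c) • (⟨0,0,0,1⟩:ℍ[ℝ]), re_smul_kq (1/c), part2 c hc hq'⟩
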